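/- For every v > 0, the one-dimensional projection of the rate function satisfies inf_{u>0} I(u,v) = 4·log² v. -/

import Mathlib

open MeasureTheory ProbabilityTheory Filter Real

/-- The variational rate function `I(u,v)`: infimum of `4∫₀¹ f'(z)² dz` over absolutely
continuous `f : [0,1] → ℝ` (written as `f(z) = ∫₀ᶻ g`) with square-integrable derivative `g`,
`f(0) = 0`, `∫₀¹ e^{2 f(z)} dz = u` and `e^{f(1)} = v`. -/
noncomputable def ratefun (u v : ℝ) : ℝ :=
  sInf {r : ℝ | ∃ g : ℝ → ℝ,
    IntervalIntegrable g volume 0 1 ∧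
    IntervalIntegrable (fun z => (g z) ^ 2) volume 0 1 ∧
    (∫ z in (0:ℝ)..(1:ℝ), Real.exp (2 * ∫ t in (0:ℝ)..z, g t)) = u ∧
    Real.exp (∫ t in (0:ℝ)..(1:ℝ), g t) = v ∧
    r = 4 * ∫ z in (0:ℝ)..(1:ℝ), (g z) ^ 2}



-- Cauchy-Schwarz step
lemma sq_int_le (g : ℝ → ℝ) (hg : IntervalIntegrable g volume 0 1)
    (hg2 : IntervalIntegrable (fun z => (g z) ^ 2) volume 0 1) :
    (∫ z in (0:ℝ)..1, g z) ^ 2 ≤ ∫ z in (0:ℝ)..1, (g z) ^ 2 := by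
  set m := ∫ z in (0:ℝ)..1, g z with hm
  have hint : IntervalIntegrable (fun z => (g z - m) ^ 2) volume 0 1 := by
    have : (fun z => (g z - m) ^ 2) = fun z => (g z) ^ 2 - (2*m) * g z + m ^ 2 := by
      funext z; ring
    rw [this]
    exact (hg2.sub (hg.const_mul _)).add intervalIntegrable_const
  have h0 : 0 ≤ ∫ z in (0:ℝ)..1, (g z - m) ^ 2 :=
    intervalIntegral.integral_nonneg (by norm_num) (fun x _ => sq_nonneg _)
  have hexp : ∫ z in (0:ℝ)..1, (g z - m) ^ 2
      = (∫ z in (0:ℝ)..1, (g z) ^ 2) - m ^ 2 := by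
    have h1 : ∀ z, (g z - m) ^ 2 = (g z) ^ 2 - (2*m) * g z + m ^ 2 := fun z => by ring
    simp_rw [h1]
    rw [intervalIntegral.integral_add ((hg2.sub (hg.const_mul _))) intervalIntegrable_const,
      intervalIntegral.integral_sub hg2 (hg.const_mul _),
      intervalIntegral.integral_const_mul, intervalIntegral.integral_const]
    simp only [smul_eq_mul, sub_zero, one_mul, ← hm]; ring
  linarith

lemma int_g (L c z : ℝ) :
    ∫ t in (0:ℝ)..z, (L + c * (1 - 2 * t)) = z * L + c * (z - z ^ 2) := by
  have hderiv : ∀ x ∈ Set.uIcc (0:ℝ) z,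
      HasDerivAt (fun t => t * L + c * (t - t ^ 2)) (L + c * (1 - 2 * x)) x := by
    intro x _
    have h1 : HasDerivAt (fun t : ℝ => t * L + c * (t - t ^ 2))
        (1 * L + c * (1 - 2 * x ^ 1)) x := by
      exact ((hasDerivAt_id x).mul_const L).add
        (((hasDerivAt_id x).sub (hasDerivAt_pow 2 x)).const_mul c)
    simpa using h1
  have hint : IntervalIntegrable (fun t => L + c * (1 - 2 * t)) volume 0 z :=
    (by continuity : Continuous fun t : ℝ => L + c * (1 - 2 * t)).intervalIntegrable 0 z
  have := intervalIntegral.integral_eq_sub_of_hasDerivAt hderiv hint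
  simpa using this

noncomputable def Ufun (L c : ℝ) : ℝ :=
  ∫ z in (0:ℝ)..1, Real.exp (2 * (z * L + c * (z - z ^ 2)))

lemma Ufun_cont (L : ℝ) : Continuous (Ufun L) := by
  apply intervalIntegral.continuous_parametric_intervalIntegral_of_continuous'
  · exact (by continuity :
      Continuous fun p : ℝ × ℝ => Real.exp (2 * (p.2 * L + p.1 * (p.2 - p.2 ^ 2))))

lemma Ufun_atTop (L : ℝ) : Tendsto (Ufun L) atTop atTop := by
  have hlow : ∀ c : ℝ, 0 ≤ c →
      Real.exp (-2 * |L| + (3/8) * c) * (1/2) ≤ Ufun L c := by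
    intro c hc
    have hcont : ∀ a b : ℝ, IntervalIntegrable
        (fun z => Real.exp (2 * (z * L + c * (z - z ^ 2)))) volume a b := fun a b =>
      (by continuity : Continuous fun z : ℝ => Real.exp (2 * (z * L + c * (z - z ^ 2)))).intervalIntegrable a b
    have hsplit : Ufun L c = (∫ z in (0:ℝ)..(1/4), Real.exp (2 * (z * L + c * (z - z ^ 2))))
        + (∫ z in (1/4:ℝ)..(3/4), Real.exp (2 * (z * L + c * (z - z ^ 2))))
        + (∫ z in (3/4:ℝ)..1, Real.exp (2 * (z * L + c * (z - z ^ 2)))) := by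
      rw [Ufun, intervalIntegral.integral_add_adjacent_intervals (hcont 0 (1/4)) (hcont (1/4) (3/4)),
        intervalIntegral.integral_add_adjacent_intervals (hcont 0 (3/4)) (hcont (3/4) 1)]
    have h1 : 0 ≤ ∫ z in (0:ℝ)..(1/4), Real.exp (2 * (z * L + c * (z - z ^ 2))) :=
      intervalIntegral.integral_nonneg (by norm_num) (fun x _ => (Real.exp_pos _).le)
    have h3 : 0 ≤ ∫ z in (3/4:ℝ)..1, Real.exp (2 * (z * L + c * (z - z ^ 2))) :=
      intervalIntegral.integral_nonneg (by norm_num) (fun x _ => (Real.exp_pos _).le)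
    have h2 : Real.exp (-2 * |L| + (3/8) * c) * (1/2)
        ≤ ∫ z in (1/4:ℝ)..(3/4), Real.exp (2 * (z * L + c * (z - z ^ 2))) := by
      have hmono : ∀ x ∈ Set.Icc (1/4:ℝ) (3/4),
          Real.exp (-2 * |L| + (3/8) * c) ≤ Real.exp (2 * (x * L + c * (x - x ^ 2))) := by
        intro x hx
        apply Real.exp_le_exp.2
        have hxL : -2 * |L| ≤ 2 * (x * L) := by
          have h1 : |x * L| ≤ |L| := by
            rw [abs_mul]
            have : |x| ≤ 1 := by
              rw [abs_le]; constructor <;> nlinarith [hx.1, hx.2]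
            nlinarith [abs_nonneg L]
          nlinarith [neg_abs_le (x * L)]
        have hxx : (3/16 : ℝ) ≤ x - x ^ 2 := by nlinarith [hx.1, hx.2]
        nlinarith
      calc Real.exp (-2 * |L| + (3/8) * c) * (1/2)
          = ∫ _z in (1/4:ℝ)..(3/4), Real.exp (-2 * |L| + (3/8) * c) := by
            rw [intervalIntegral.integral_const]; norm_num; ring
        _ ≤ _ := intervalIntegral.integral_mono_on (by norm_num)
            intervalIntegrable_const (hcont _ _) hmono
    linarith [hsplit ▸ (by linarith : Real.exp (-2 * |L| + (3/8) * c) * (1/2) ≤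
      (∫ z in (0:ℝ)..(1/4), Real.exp (2 * (z * L + c * (z - z ^ 2))))
        + (∫ z in (1/4:ℝ)..(3/4), Real.exp (2 * (z * L + c * (z - z ^ 2))))
        + (∫ z in (3/4:ℝ)..1, Real.exp (2 * (z * L + c * (z - z ^ 2)))))]
  have hbound : Tendsto (fun c : ℝ => Real.exp (-2 * |L| + (3/8) * c) * (1/2)) atTop atTop := by
    apply Tendsto.atTop_mul_const (by norm_num : (0:ℝ) < 1/2)
    apply Real.tendsto_exp_atTop.comp
    apply tendsto_atTop_add_const_left
    exact (tendsto_const_mul_atTop_of_pos (by norm_num)).2 tendsto_id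
  exact tendsto_atTop_mono' atTop (eventually_atTop.2 ⟨0, fun c hc => hlow c hc⟩) hbound

lemma Ufun_atBot (L : ℝ) : Tendsto (Ufun L) atBot (nhds 0) := by
  have heq : ∀ c : ℝ, Ufun L c
      = ∫ z in Set.Ioc (0:ℝ) 1, Real.exp (2 * (z * L + c * (z - z ^ 2))) := by
    intro c
    rw [Ufun, intervalIntegral.integral_of_le (by norm_num)]
  rw [show Ufun L = fun c => ∫ z in Set.Ioc (0:ℝ) 1,
    Real.exp (2 * (z * L + c * (z - z ^ 2))) from funext heq]
  have hae1 : ∀ᵐ z : ℝ, z ≠ (1:ℝ) := by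
    rw [ae_iff]
    simpa using Real.volume_singleton
  have key : Tendsto (fun c => ∫ z in Set.Ioc (0:ℝ) 1,
      Real.exp (2 * (z * L + c * (z - z ^ 2)))) atBot
      (nhds (∫ _z in Set.Ioc (0:ℝ) 1, (0:ℝ))) := by
    apply MeasureTheory.tendsto_integral_filter_of_dominated_convergence
      (fun _ => Real.exp (2 * |L|))
    · filter_upwards with c
      exact ((by continuity : Continuous fun z : ℝ =>
        Real.exp (2 * (z * L + c * (z - z ^ 2)))).aestronglyMeasurable).restrict
    · filter_upwards [eventually_le_atBot (0:ℝ)] with c hc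
      filter_upwards [ae_restrict_mem measurableSet_Ioc] with z hz
      rw [Real.norm_eq_abs, abs_of_pos (Real.exp_pos _)]
      apply Real.exp_le_exp.2
      have h1 : z * L ≤ |L| := by
        have hz1 : 0 < z := hz.1
        have hz2 : z ≤ 1 := hz.2
        nlinarith [le_abs_self L, neg_abs_le L]
      have h2 : c * (z - z ^ 2) ≤ 0 := by
        apply mul_nonpos_of_nonpos_of_nonneg hc
        nlinarith [hz.1, hz.2]
      nlinarith [abs_nonneg L]
    · exact integrableOn_const (by simp) (by simp)
    · filter_upwards [ae_restrict_mem measurableSet_Ioc,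
        MeasureTheory.ae_restrict_of_ae hae1] with z hz hz1
      have hpos : 0 < z - z ^ 2 := by
        have := lt_of_le_of_ne hz.2 hz1
        nlinarith [hz.1]
      have hlin : Tendsto (fun c : ℝ => 2 * (z * L + c * (z - z ^ 2))) atBot atBot := by
        have h1 : Tendsto (fun c : ℝ => (2 * (z - z ^ 2)) * c + 2 * (z * L)) atBot atBot := by
          apply tendsto_atBot_add_const_right
          exact (tendsto_const_mul_atBot_of_pos (by positivity)).2 tendsto_id
        exact h1.congr (fun c => by ring)
      exact Real.tendsto_exp_atBot.comp hlin
  simpa using key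

lemma Ufun_surj (L : ℝ) {u : ℝ} (hu : 0 < u) : ∃ c, Ufun L c = u := by
  obtain ⟨c₁, hc₁⟩ : ∃ c₁, Ufun L c₁ ≤ u := by
    have h1 : ∀ᶠ c in atBot, Ufun L c < u :=
      (Ufun_atBot L).eventually (eventually_lt_nhds hu)
    obtain ⟨c₁, hc₁⟩ := h1.exists
    exact ⟨c₁, hc₁.le⟩
  obtain ⟨c₂, hc₂⟩ : ∃ c₂, u ≤ Ufun L c₂ := ((Ufun_atTop L).eventually_ge_atTop u).exists
  have := intermediate_value_uIcc (a := c₁) (b := c₂) (Ufun_cont L).continuousOn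
  have hmem : u ∈ Set.uIcc (Ufun L c₁) (Ufun L c₂) :=
    Set.Icc_subset_uIcc ⟨hc₁, hc₂⟩
  obtain ⟨c, _, hc⟩ := this hmem
  exact ⟨c, hc⟩

lemma set_nonempty (u v : ℝ) (hu : 0 < u) (hv : 0 < v) :
    {r : ℝ | ∃ g : ℝ → ℝ,
    IntervalIntegrable g volume 0 1 ∧
    IntervalIntegrable (fun z => (g z) ^ 2) volume 0 1 ∧
    (∫ z in (0:ℝ)..(1:ℝ), Real.exp (2 * ∫ t in (0:ℝ)..z, g t)) = u ∧
    Real.exp (∫ t in (0:ℝ)..(1:ℝ), g t) = v ∧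
    r = 4 * ∫ z in (0:ℝ)..(1:ℝ), (g z) ^ 2}.Nonempty := by
  set L := Real.log v with hL
  obtain ⟨c, hc⟩ := Ufun_surj L hu
  refine ⟨4 * ∫ z in (0:ℝ)..(1:ℝ), ((L + c * (1 - 2 * z)) ^ 2),
    fun t => L + c * (1 - 2 * t), ?_, ?_, ?_, ?_, rfl⟩
  · exact (by continuity : Continuous fun t : ℝ => L + c * (1 - 2 * t)).intervalIntegrable 0 1
  · exact (by continuity : Continuous fun t : ℝ => (L + c * (1 - 2 * t)) ^ 2).intervalIntegrable 0 1
  · simp only [int_g]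
    exact hc
  · rw [int_g]
    norm_num
    exact Real.exp_log hv

lemma mem_lb {v r : ℝ} {u : ℝ}
    (hr : r ∈ {r : ℝ | ∃ g : ℝ → ℝ,
    IntervalIntegrable g volume 0 1 ∧
    IntervalIntegrable (fun z => (g z) ^ 2) volume 0 1 ∧
    (∫ z in (0:ℝ)..(1:ℝ), Real.exp (2 * ∫ t in (0:ℝ)..z, g t)) = u ∧
    Real.exp (∫ t in (0:ℝ)..(1:ℝ), g t) = v ∧
    r = 4 * ∫ z in (0:ℝ)..(1:ℝ), (g z) ^ 2}) :
    4 * (Real.log v) ^ 2 ≤ r := by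
  obtain ⟨g, hg, hg2, _, hexp, hr⟩ := hr
  have hm : ∫ t in (0:ℝ)..(1:ℝ), g t = Real.log v := by
    have := congrArg Real.log hexp
    rwa [Real.log_exp] at this
  have := sq_int_le g hg hg2
  rw [hm] at this
  rw [hr]
  linarith

lemma mem_set (v : ℝ) (hv : 0 < v) (c : ℝ) :
    (4 * ∫ z in (0:ℝ)..(1:ℝ), ((Real.log v + c * (1 - 2 * z)) ^ 2)) ∈
    {r : ℝ | ∃ g : ℝ → ℝ,
    IntervalIntegrable g volume 0 1 ∧
    IntervalIntegrable (fun z => (g z) ^ 2) volume 0 1 ∧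
    (∫ z in (0:ℝ)..(1:ℝ), Real.exp (2 * ∫ t in (0:ℝ)..z, g t)) = Ufun (Real.log v) c ∧
    Real.exp (∫ t in (0:ℝ)..(1:ℝ), g t) = v ∧
    r = 4 * ∫ z in (0:ℝ)..(1:ℝ), (g z) ^ 2} := by
  refine ⟨fun t => Real.log v + c * (1 - 2 * t), ?_, ?_, ?_, ?_, rfl⟩
  · exact (by continuity :
      Continuous fun t : ℝ => Real.log v + c * (1 - 2 * t)).intervalIntegrable 0 1
  · exact (by continuity :
      Continuous fun t : ℝ => (Real.log v + c * (1 - 2 * t)) ^ 2).intervalIntegrable 0 1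
  · simp only [int_g]
    rfl
  · rw [int_g]
    norm_num
    exact Real.exp_log hv


/-- One-dimensional projection: for every `v > 0`, `inf_{u>0} I(u,v) = 4 log² v`. -/
theorem ratefun_proj_v (v : ℝ) (hv : 0 < v) :
    sInf {r : ℝ | ∃ u : ℝ, 0 < u ∧ r = ratefun u v} = 4 * (Real.log v) ^ 2 := by
  set L := Real.log v with hLdef
  set u₀ : ℝ := Ufun L 0 with hu₀def
  have hu₀pos : 0 < u₀ := by
    rw [hu₀def, Ufun]
    apply intervalIntegral.intervalIntegral_pos_of_pos
    · exact (by continuity : Continuous fun z : ℝ =>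
        Real.exp (2 * (z * L + 0 * (z - z ^ 2)))).intervalIntegrable 0 1
    · exact fun x => Real.exp_pos _
    · norm_num
  have hge : ∀ u : ℝ, 0 < u → 4 * L ^ 2 ≤ ratefun u v := by
    intro u hu
    exact le_csInf (set_nonempty u v hu hv) (fun b hb => mem_lb hb)
  have hle : ratefun u₀ v ≤ 4 * L ^ 2 := by
    have hmem := mem_set v hv 0
    have hval : (4 * ∫ z in (0:ℝ)..(1:ℝ), ((L + 0 * (1 - 2 * z)) ^ 2)) = 4 * L ^ 2 := by
      norm_num
    rw [hval] at hmem
    exact csInf_le ⟨4 * L ^ 2, fun r hr => mem_lb hr⟩ hmem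
  apply le_antisymm
  · refine le_trans (csInf_le ?_ ⟨u₀, hu₀pos, rfl⟩) hle
    exact ⟨4 * L ^ 2, fun r ⟨u, hu, hr⟩ => hr ▸ hge u hu⟩
  · exact le_csInf ⟨ratefun u₀ v, u₀, hu₀pos, rfl⟩ (fun r ⟨u, hu, hr⟩ => hr ▸ hge u hu)
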